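/- Type awareness does not help the eavesdropper: Let 𝒳, 𝒵 be finite alphabets, d_E : 𝒳×𝒵 → [0,∞) a distortion measure, D ≥ 0, and for each n let (X_n, Y_n) be a pair of random variables with X_n taking values in 𝒳^n and Y_n taking values in a finite set 𝒴_n. Then for every n and every genie-aided eavesdropper σ̃ : 𝒴_n × 𝒫_n(𝒳) → 𝒵^n there exists a plain eavesdropper σ : 𝒴_n → 𝒵^n with P[ d_E(X_n, σ(Y_n)) ≤ D ] ≥ |𝒫_n(𝒳)|^{-1} · P[ d_E(X_n, σ̃(Y_n, Q̂_{X_n})) ≤ D ]. Consequently, since |𝒫_n(𝒳)| ≤ (n+1)^{|𝒳|}, the liminf (respectively limsup) of −(1/n) log₂ of the maximal exiguous-distortion probability max_σ P[d_E(X_n,σ(Y_n)) ≤ D] over plain eavesdroppers equals the corresponding quantity maximized over genie-aided eavesdroppers σ̃ : 𝒴_n × 𝒫_n(𝒳) → 𝒵^n. -/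

import Mathlib

open scoped BigOperators

noncomputable section

open Classical in
/-- Indicator of a proposition, as a real number. -/
def ind (p : Prop) : ℝ := if p then 1 else 0

/-- Average per-letter distortion between sequences. -/
def seqDist {A B : Type*} (d : A → B → ℝ) {n : ℕ} (x : Fin n → A) (z : Fin n → B) : ℝ :=
  (n : ℝ)⁻¹ * ∑ i, d (x i) (z i)

/-- Empirical distribution (type) of a sequence. -/
def empDist {A : Type*} [Fintype A] [DecidableEq A] {n : ℕ} (x : Fin n → A) : A → ℝ :=
  fun a => ((Finset.univ.filter fun i => x i = a).card : ℝ) / n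

/-- `p` is a probability distribution on a finite alphabet. -/
def IsDist {A : Type*} [Fintype A] (p : A → ℝ) : Prop :=
  (∀ a, 0 ≤ p a) ∧ ∑ a, p a = 1

/-- The set of types of length-`n` sequences over `A`. -/
def typeSet (A : Type*) [Fintype A] [DecidableEq A] (n : ℕ) : Set (A → ℝ) :=
  {Q | ∃ x : Fin n → A, empDist x = Q}


lemma ind_nonneg (p : Prop) : 0 ≤ ind p := by unfold ind; split <;> norm_num
lemma ind_le_one (p : Prop) : ind p ≤ 1 := by unfold ind; split <;> norm_num

lemma typeSet_eq_range (A : Type*) [Fintype A] [DecidableEq A] (n : ℕ) :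
    typeSet A n = Set.range (empDist (A := A) (n := n)) := rfl

lemma typeSet_finite (A : Type*) [Fintype A] [DecidableEq A] (n : ℕ) :
    (typeSet A n).Finite := by
  rw [typeSet_eq_range]; exact Set.finite_range _

lemma typeSet_ncard_le (A : Type*) [Fintype A] [DecidableEq A] (n : ℕ) :
    (typeSet A n).ncard ≤ (n + 1) ^ Fintype.card A := by
  classical
  set F : (A → ℝ) → (A → Fin (n + 1)) :=
    fun Q a => ⟨⌊Q a * n⌋₊ % (n + 1), Nat.mod_lt _ (Nat.succ_pos n)⟩ with hF
  have hinj : Set.InjOn F (typeSet A n) := by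
    rintro Q ⟨x, rfl⟩ Q' ⟨y, rfl⟩ h
    rcases Nat.eq_zero_or_pos n with hn | hn
    · subst hn
      funext a
      simp [empDist]
    · funext a
      have key : ∀ z : Fin n → A, F (empDist z) a =
          ⟨(Finset.univ.filter fun i => z i = a).card,
            Nat.lt_succ_of_le (le_trans (Finset.card_filter_le _ _) (by simp))⟩ := by
        intro z
        have hc : ((Finset.univ.filter fun i => z i = a).card : ℝ) / n * n
            = ((Finset.univ.filter fun i => z i = a).card : ℝ) := by
          field_simp
        have hle : (Finset.univ.filter fun i => z i = a).card ≤ n := by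
          exact le_trans (Finset.card_filter_le _ _) (by simp)
        simp only [hF, empDist, hc, Nat.floor_natCast]
        congr 1
        exact Nat.mod_eq_of_lt (Nat.lt_succ_of_le hle)
      have h1 := key x
      have h2 := key y
      have := congrFun h a
      rw [h1, h2] at this
      have hcard : (Finset.univ.filter fun i => x i = a).card
          = (Finset.univ.filter fun i => y i = a).card := by
        simpa using this
      simp [empDist, hcard]
  calc (typeSet A n).ncard = (F '' typeSet A n).ncard := (Set.ncard_image_of_injOn hinj).symm
    _ ≤ (Set.univ : Set (A → Fin (n+1))).ncard :=
        Set.ncard_le_ncard (Set.subset_univ _) Set.finite_univ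
    _ = (n + 1) ^ Fintype.card A := by
        rw [Set.ncard_univ, Nat.card_eq_fintype_card, Fintype.card_fun]
        simp

open Filter in
lemma lim_eqs (u v e : ℕ → ℝ) (hv0 : ∀ n, 0 ≤ v n) (hvu : ∀ n, v n ≤ u n)
    (hue : ∀ n, u n ≤ v n + e n) (he : Tendsto e atTop (nhds 0)) :
    liminf u atTop = liminf v atTop ∧ limsup u atTop = limsup v atTop := by
  have hsub : ∀ a : ℝ, ∀ ε : ℝ, 0 < ε → (∀ᶠ n in atTop, a ≤ u n) → ∀ᶠ n in atTop, a - ε ≤ v n := by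
    intro a ε hε h
    have hev : ∀ᶠ n in atTop, e n < ε := he.eventually_lt_const hε
    filter_upwards [h, hev] with n h1 h2
    have := hue n
    linarith
  have haddT : ∀ a : ℝ, ∀ ε : ℝ, 0 < ε → (∀ᶠ n in atTop, v n ≤ a) → ∀ᶠ n in atTop, u n ≤ a + ε := by
    intro a ε hε h
    have hev : ∀ᶠ n in atTop, e n < ε := he.eventually_lt_const hε
    filter_upwards [h, hev] with n h1 h2
    have := hue n
    linarith
  constructor
  · rw [liminf_eq, liminf_eq]
    set Su := {a : ℝ | ∀ᶠ n in atTop, a ≤ u n} with hSu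
    set Sv := {a : ℝ | ∀ᶠ n in atTop, a ≤ v n} with hSv
    have hmem0 : (0 : ℝ) ∈ Sv := Eventually.of_forall hv0
    have hss : Sv ⊆ Su := fun a ha => ha.mono fun n hn => le_trans hn (hvu n)
    by_cases hbdd : BddAbove Su
    · apply le_antisymm
      · apply csSup_le ⟨0, hss hmem0⟩
        intro a ha
        apply le_of_forall_pos_le_add
        intro ε hε
        have : a - ε ∈ Sv := hsub a ε hε ha
        have := le_csSup (hbdd.mono hss) this
        linarith
      · exact csSup_le_csSup hbdd ⟨0, hmem0⟩ hss
    · have hbdd' : ¬ BddAbove Sv := by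
        intro ⟨b, hb⟩
        apply hbdd
        refine ⟨b + 1, fun a ha => ?_⟩
        have : a - 1 ∈ Sv := hsub a 1 one_pos ha
        have := hb this
        linarith
      rw [Real.sSup_of_not_bddAbove hbdd, Real.sSup_of_not_bddAbove hbdd']
  · rw [limsup_eq, limsup_eq]
    set Tu := {a : ℝ | ∀ᶠ n in atTop, u n ≤ a} with hTu
    set Tv := {a : ℝ | ∀ᶠ n in atTop, v n ≤ a} with hTv
    have hss : Tu ⊆ Tv := fun a ha => ha.mono fun n hn => le_trans (hvu n) hn
    have hbddv : BddBelow Tv := by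
      refine ⟨0, fun a ha => ?_⟩
      obtain ⟨n, hn⟩ := ha.exists
      exact le_trans (hv0 n) hn
    rcases Set.eq_empty_or_nonempty Tv with hTve | hTvne
    · have : Tu = ∅ := Set.subset_empty_iff.mp (hTve ▸ hss)
      rw [this, hTve]
    · obtain ⟨a0, ha0⟩ := hTvne
      have hTune : Tu.Nonempty := ⟨a0 + 1, haddT a0 1 one_pos ha0⟩
      apply le_antisymm
      · apply le_csInf ⟨a0, ha0⟩
        intro a ha
        apply le_of_forall_pos_le_add
        intro ε hε
        exact csInf_le (hbddv.mono hss) (haddT a ε hε ha)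
      · exact csInf_le_csInf hbddv hTune hss

set_option maxHeartbeats 1000000 in
open Filter Real in
lemma tendsto_aux (k : ℕ) :
    Tendsto (fun n : ℕ => (k : ℝ) * Real.logb 2 (n + 1) / n) atTop (nhds 0) := by
  have h1 : Tendsto (fun n : ℕ => Real.log (n + 1) / (n + 1)) atTop (nhds 0) := by
    have := Real.isLittleO_log_id_atTop.tendsto_div_nhds_zero
    exact this.comp (tendsto_natCast_atTop_atTop.atTop_add tendsto_const_nhds)
  have h2 : Tendsto (fun n : ℕ => ((n : ℝ) + 1) / n) atTop (nhds 1) := by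
    have : (fun n : ℕ => ((n : ℝ) + 1) / n) =ᶠ[atTop] fun n : ℕ => 1 + 1 / n := by
      filter_upwards [eventually_gt_atTop 0] with n hn
      have : (n : ℝ) ≠ 0 := Nat.cast_ne_zero.mpr hn.ne'
      field_simp
    rw [tendsto_congr' this]
    have : Tendsto (fun n : ℕ => 1 / (n : ℝ)) atTop (nhds 0) := tendsto_one_div_atTop_nhds_zero_nat
    simpa using tendsto_const_nhds.add this
  have h3 : Tendsto (fun n : ℕ => Real.log (n + 1) / n) atTop (nhds 0) := by
    have heq : (fun n : ℕ => Real.log (n + 1) / n)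
        =ᶠ[atTop] fun n : ℕ => (Real.log (n + 1) / (n + 1)) * (((n : ℝ) + 1) / n) := by
      filter_upwards [eventually_gt_atTop 0] with n hn
      have hn0 : (n : ℝ) ≠ 0 := Nat.cast_ne_zero.mpr hn.ne'
      have hn1 : (n : ℝ) + 1 ≠ 0 := by positivity
      field_simp
    rw [tendsto_congr' heq]
    simpa using h1.mul h2
  have : Tendsto (fun n : ℕ => (k : ℝ) / Real.log 2 * (Real.log (n + 1) / n)) atTop (nhds 0) := by
    simpa using h3.const_mul ((k : ℝ) / Real.log 2)
  apply this.congr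
  intro n
  rw [Real.logb]
  field_simp

lemma key_step {𝓧 𝓩 : Type*} [Fintype 𝓧] [DecidableEq 𝓧] [Fintype 𝓩] [Nonempty 𝓩]
    (dE : 𝓧 → 𝓩 → ℝ) (D : ℝ) {n M : ℕ} (p : (Fin n → 𝓧) × Fin M → ℝ)
    (hp0 : ∀ t, 0 ≤ p t)
    (σg : Fin M → {Q : 𝓧 → ℝ // Q ∈ typeSet 𝓧 n} → (Fin n → 𝓩)) :
    ∃ σ : Fin M → (Fin n → 𝓩),
      ((typeSet 𝓧 n).ncard : ℝ)⁻¹ *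
          (∑ t : (Fin n → 𝓧) × Fin M,
            p t * ind (seqDist dE t.1 (σg t.2 ⟨empDist t.1, ⟨t.1, rfl⟩⟩) ≤ D))
        ≤ ∑ t : (Fin n → 𝓧) × Fin M,
            p t * ind (seqDist dE t.1 (σ t.2) ≤ D) := by
  classical
  set T := (typeSet_finite 𝓧 n).toFinset with hT
  rcases T.eq_empty_or_nonempty with hTe | hTne
  · refine ⟨fun _ => Classical.arbitrary _, ?_⟩
    have hempty : IsEmpty ((Fin n → 𝓧) × Fin M) := by
      constructor
      intro t
      have : empDist t.1 ∈ T := by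
        rw [hT, Set.Finite.mem_toFinset]
        exact ⟨t.1, rfl⟩
      simp [hTe] at this
    rw [Finset.univ_eq_empty]
    simp
  · set g : (Fin n → 𝓧) × Fin M → (𝓧 → ℝ) := fun t => empDist t.1 with hg
    set f : (Fin n → 𝓧) × Fin M → ℝ :=
      fun t => p t * ind (seqDist dE t.1 (σg t.2 ⟨empDist t.1, ⟨t.1, rfl⟩⟩) ≤ D) with hf
    set S : (𝓧 → ℝ) → ℝ := fun Q => ∑ t ∈ Finset.univ.filter fun t => g t = Q, f t with hS
    obtain ⟨Q, hQT, hQmax⟩ := T.exists_max_image S hTne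
    have hQ : Q ∈ typeSet 𝓧 n := by rwa [hT, Set.Finite.mem_toFinset] at hQT
    refine ⟨fun y => σg y ⟨Q, hQ⟩, ?_⟩
    have hfib : ∑ Q' ∈ T, S Q' = ∑ t : (Fin n → 𝓧) × Fin M, f t := by
      apply Finset.sum_fiberwise_of_maps_to
      intro t _
      rw [hT, Set.Finite.mem_toFinset]
      exact ⟨t.1, rfl⟩
    have hGle : ∑ t : (Fin n → 𝓧) × Fin M, f t ≤ (T.card : ℝ) * S Q := by
      rw [← hfib, ← nsmul_eq_mul]
      exact Finset.sum_le_card_nsmul T S (S Q) fun Q' hQ' => hQmax Q' hQ'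
    have hcard : ((typeSet 𝓧 n).ncard : ℝ) = (T.card : ℝ) := by
      rw [hT, Set.ncard_eq_toFinset_card _ (typeSet_finite 𝓧 n)]
    have hcpos : (0 : ℝ) < T.card := by
      exact_mod_cast Finset.card_pos.mpr hTne
    have hSQle : S Q ≤ ∑ t : (Fin n → 𝓧) × Fin M, p t * ind (seqDist dE t.1 (σg t.2 ⟨Q, hQ⟩) ≤ D) := by
      have heq : ∀ t ∈ Finset.univ.filter fun t => g t = Q,
          f t = p t * ind (seqDist dE t.1 (σg t.2 ⟨Q, hQ⟩) ≤ D) := by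
        intro t ht
        have hgt : g t = Q := (Finset.mem_filter.mp ht).2
        have hsub : (⟨empDist t.1, ⟨t.1, rfl⟩⟩ : {Q' // Q' ∈ typeSet 𝓧 n}) = ⟨Q, hQ⟩ :=
          Subtype.ext hgt
        simp only [hf]
        rw [hsub]
      have hSQ : S Q = ∑ t ∈ Finset.univ.filter fun t => g t = Q,
          p t * ind (seqDist dE t.1 (σg t.2 ⟨Q, hQ⟩) ≤ D) := Finset.sum_congr rfl heq
      rw [hSQ]
      apply Finset.sum_le_sum_of_subset_of_nonneg (Finset.filter_subset _ _)
      intro t _ _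
      exact mul_nonneg (hp0 t) (ind_nonneg _)
    rw [hcard, inv_mul_le_iff₀ hcpos]
    calc ∑ t : (Fin n → 𝓧) × Fin M, f t ≤ (T.card : ℝ) * S Q := hGle
      _ ≤ _ := by
        apply mul_le_mul_of_nonneg_left hSQle hcpos.le

lemma pointwise_bounds {𝓧 𝓩 : Type*} [Fintype 𝓧] [DecidableEq 𝓧] [Fintype 𝓩] [Nonempty 𝓩]
    (dE : 𝓧 → 𝓩 → ℝ) (D : ℝ) {n M : ℕ} (p : (Fin n → 𝓧) × Fin M → ℝ)
    (hp0 : ∀ t, 0 ≤ p t) (hp1 : ∑ t, p t = 1) :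
    0 ≤ -(n : ℝ)⁻¹ * Real.logb 2
        (⨆ σg : Fin M → {Q : 𝓧 → ℝ // Q ∈ typeSet 𝓧 n} → (Fin n → 𝓩),
          ∑ t : (Fin n → 𝓧) × Fin M,
            p t * ind (seqDist dE t.1 (σg t.2 ⟨empDist t.1, ⟨t.1, rfl⟩⟩) ≤ D)) ∧
    -(n : ℝ)⁻¹ * Real.logb 2
        (⨆ σg : Fin M → {Q : 𝓧 → ℝ // Q ∈ typeSet 𝓧 n} → (Fin n → 𝓩),
          ∑ t : (Fin n → 𝓧) × Fin M,
            p t * ind (seqDist dE t.1 (σg t.2 ⟨empDist t.1, ⟨t.1, rfl⟩⟩) ≤ D))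
      ≤ -(n : ℝ)⁻¹ * Real.logb 2
        (⨆ σ : Fin M → (Fin n → 𝓩),
          ∑ t : (Fin n → 𝓧) × Fin M, p t * ind (seqDist dE t.1 (σ t.2) ≤ D)) ∧
    -(n : ℝ)⁻¹ * Real.logb 2
        (⨆ σ : Fin M → (Fin n → 𝓩),
          ∑ t : (Fin n → 𝓧) × Fin M, p t * ind (seqDist dE t.1 (σ t.2) ≤ D))
      ≤ -(n : ℝ)⁻¹ * Real.logb 2
        (⨆ σg : Fin M → {Q : 𝓧 → ℝ // Q ∈ typeSet 𝓧 n} → (Fin n → 𝓩),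
          ∑ t : (Fin n → 𝓧) × Fin M,
            p t * ind (seqDist dE t.1 (σg t.2 ⟨empDist t.1, ⟨t.1, rfl⟩⟩) ≤ D))
        + (Fintype.card 𝓧 : ℝ) * Real.logb 2 (n + 1) / n := by
  classical
  set P : (Fin M → (Fin n → 𝓩)) → ℝ :=
    fun σ => ∑ t : (Fin n → 𝓧) × Fin M, p t * ind (seqDist dE t.1 (σ t.2) ≤ D) with hPdef
  set G : (Fin M → {Q : 𝓧 → ℝ // Q ∈ typeSet 𝓧 n} → (Fin n → 𝓩)) → ℝ :=
    fun σg => ∑ t : (Fin n → 𝓧) × Fin M,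
      p t * ind (seqDist dE t.1 (σg t.2 ⟨empDist t.1, ⟨t.1, rfl⟩⟩) ≤ D) with hGdef
  set a : ℝ := ⨆ σ, P σ with hadef
  set b : ℝ := ⨆ σg, G σg with hbdef
  have hPnn : ∀ σ, 0 ≤ P σ :=
    fun σ => Finset.sum_nonneg fun t _ => mul_nonneg (hp0 t) (ind_nonneg _)
  have hGnn : ∀ σg, 0 ≤ G σg :=
    fun σg => Finset.sum_nonneg fun t _ => mul_nonneg (hp0 t) (ind_nonneg _)
  have hPle : ∀ σ, P σ ≤ 1 := by
    intro σ
    rw [← hp1]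
    exact Finset.sum_le_sum fun t _ => mul_le_of_le_one_right (hp0 t) (ind_le_one _)
  have hGle : ∀ σg, G σg ≤ 1 := by
    intro σg
    rw [← hp1]
    exact Finset.sum_le_sum fun t _ => mul_le_of_le_one_right (hp0 t) (ind_le_one _)
  have hbddP : BddAbove (Set.range P) := ⟨1, by rintro _ ⟨σ, rfl⟩; exact hPle σ⟩
  have hbddG : BddAbove (Set.range G) := ⟨1, by rintro _ ⟨σg, rfl⟩; exact hGle σg⟩
  have ha0 : 0 ≤ a := le_trans (hPnn (Classical.arbitrary _)) (le_ciSup hbddP _)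
  have hb0 : 0 ≤ b := le_trans (hGnn (Classical.arbitrary _)) (le_ciSup hbddG _)
  have hab : a ≤ b := ciSup_le fun σ => le_ciSup hbddG (fun y _ => σ y)
  have hb1 : b ≤ 1 := ciSup_le hGle
  by_cases hn : n = 0
  · subst hn
    simp
  have hnpos : (0 : ℝ) < n := by exact_mod_cast Nat.pos_of_ne_zero hn
  have hinv : (0 : ℝ) ≤ (n : ℝ)⁻¹ := by positivity
  -- facts for the positive case
  have hmain : 0 < b → ∃ N : ℕ, 0 < N ∧ (N : ℝ) = ((typeSet 𝓧 n).ncard : ℝ) ∧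
      ((N : ℝ))⁻¹ * b ≤ a := by
    intro hbpos
    obtain ⟨σg0, hσg0⟩ : ∃ σg, 0 < G σg := by
      by_contra h
      push_neg at h
      exact absurd (ciSup_le h) (not_le.mpr hbpos)
    obtain ⟨t0, ht0⟩ : ∃ t : (Fin n → 𝓧) × Fin M, True := by
      by_contra h
      push_neg at h
      have : IsEmpty ((Fin n → 𝓧) × Fin M) := ⟨fun t => h t⟩
      rw [hGdef] at hσg0
      simp [Finset.univ_eq_empty] at hσg0
    have hty : (typeSet 𝓧 n).Nonempty := ⟨empDist t0.1, t0.1, rfl⟩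
    have hNpos : 0 < (typeSet 𝓧 n).ncard := by
      rw [Set.ncard_pos (typeSet_finite 𝓧 n)]
      exact hty
    have hNR : (0 : ℝ) < ((typeSet 𝓧 n).ncard : ℝ) := by exact_mod_cast hNpos
    refine ⟨(typeSet 𝓧 n).ncard, hNpos, rfl, ?_⟩
    rw [inv_mul_le_iff₀ hNR]
    apply ciSup_le
    intro σg
    obtain ⟨σ, hσ⟩ := key_step dE D p hp0 σg
    have h1 : G σg ≤ ((typeSet 𝓧 n).ncard : ℝ) * P σ := (inv_mul_le_iff₀ hNR).mp hσ
    exact le_trans h1 (mul_le_mul_of_nonneg_left (le_ciSup hbddP σ) hNR.le)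
  refine ⟨?_, ?_, ?_⟩
  · -- 0 ≤ v
    rcases hb0.eq_or_lt with h | hbpos
    · rw [← h, Real.logb_zero, mul_zero]
    · have hlog : Real.logb 2 b ≤ 0 := Real.logb_nonpos one_lt_two hb0 hb1
      rw [neg_mul]
      simp only [neg_nonneg]
      exact mul_nonpos_of_nonneg_of_nonpos hinv hlog
  · -- v ≤ u
    rcases hb0.eq_or_lt with h | hbpos
    · have ha : a = 0 := le_antisymm (hab.trans h.ge) ha0
      rw [ha, ← h]
    · obtain ⟨N, hNpos, hNcast, hNa⟩ := hmain hbpos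
      have hNR : (0 : ℝ) < (N : ℝ) := by exact_mod_cast hNpos
      have hapos : 0 < a := lt_of_lt_of_le (by positivity) hNa
      have hlog : Real.logb 2 a ≤ Real.logb 2 b :=
        Real.logb_le_logb_of_le one_lt_two hapos hab
      rw [neg_mul, neg_mul, neg_le_neg_iff]
      exact mul_le_mul_of_nonneg_left hlog hinv
  · -- u ≤ v + e
    rcases hb0.eq_or_lt with h | hbpos
    · have ha : a = 0 := le_antisymm (hab.trans h.ge) ha0
      rw [ha, ← h]
      have : (0:ℝ) ≤ (Fintype.card 𝓧 : ℝ) * Real.logb 2 (n + 1) / n := by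
        have : (0:ℝ) ≤ Real.logb 2 (n + 1) := Real.logb_nonneg one_lt_two (by
          have : (0:ℝ) ≤ n := hnpos.le
          linarith)
        positivity
      linarith
    · obtain ⟨N, hNpos, hNcast, hNa⟩ := hmain hbpos
      have hNR : (0 : ℝ) < (N : ℝ) := by exact_mod_cast hNpos
      have hapos : 0 < a := lt_of_lt_of_le (by positivity) hNa
      have hlog1 : Real.logb 2 ((N : ℝ)⁻¹ * b) ≤ Real.logb 2 a :=
        Real.logb_le_logb_of_le one_lt_two (by positivity) hNa
      have hlog2 : Real.logb 2 ((N : ℝ)⁻¹ * b) = Real.logb 2 b - Real.logb 2 N := by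
        rw [inv_mul_eq_div, Real.logb_div hbpos.ne' hNR.ne']
      have hNle : (N : ℝ) ≤ ((n : ℝ) + 1) ^ Fintype.card 𝓧 := by
        rw [hNcast]
        have := typeSet_ncard_le 𝓧 n
        calc ((typeSet 𝓧 n).ncard : ℝ) ≤ (((n + 1) ^ Fintype.card 𝓧 : ℕ) : ℝ) := by
              exact_mod_cast this
          _ = ((n : ℝ) + 1) ^ Fintype.card 𝓧 := by push_cast; ring
      have hlog3 : Real.logb 2 (N : ℝ) ≤ (Fintype.card 𝓧 : ℝ) * Real.logb 2 ((n : ℝ) + 1) := by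
        calc Real.logb 2 (N : ℝ) ≤ Real.logb 2 (((n : ℝ) + 1) ^ Fintype.card 𝓧) :=
              Real.logb_le_logb_of_le one_lt_two hNR hNle
          _ = (Fintype.card 𝓧 : ℝ) * Real.logb 2 ((n : ℝ) + 1) := Real.logb_pow 2 _ _
      have h4 : (n : ℝ)⁻¹ * (Real.logb 2 b - Real.logb 2 N) ≤ (n : ℝ)⁻¹ * Real.logb 2 a := by
        apply mul_le_mul_of_nonneg_left _ hinv
        rw [← hlog2]; exact hlog1
      have h5 : (n : ℝ)⁻¹ * Real.logb 2 (N : ℝ)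
          ≤ (n : ℝ)⁻¹ * ((Fintype.card 𝓧 : ℝ) * Real.logb 2 ((n : ℝ) + 1)) :=
        mul_le_mul_of_nonneg_left hlog3 hinv
      have h6 : (Fintype.card 𝓧 : ℝ) * Real.logb 2 ((n:ℝ) + 1) / n
          = (n : ℝ)⁻¹ * ((Fintype.card 𝓧 : ℝ) * Real.logb 2 ((n : ℝ) + 1)) := by
        ring
      rw [mul_sub] at h4
      rw [neg_mul, neg_mul, h6]
      linarith

/-- **Type awareness does not help the eavesdropper.** For every `n` and every genie-aided
eavesdropper (which also observes the type of the source block) there is a plain eavesdropper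
whose exiguous-distortion probability is smaller by at most the factor `|𝒫_n(𝒳)|`;
consequently the liminf and limsup exiguous-distortion exponents over plain and genie-aided
eavesdroppers coincide. -/
theorem type_awareness_does_not_help
    {𝓧 𝓩 : Type*} [Fintype 𝓧] [DecidableEq 𝓧] [Fintype 𝓩] [Nonempty 𝓩]
    (dE : 𝓧 → 𝓩 → ℝ) (D : ℝ) (hD : 0 ≤ D)
    (m : ℕ → ℕ) (p : ∀ n, (Fin n → 𝓧) × Fin (m n) → ℝ) (hp : ∀ n, IsDist (p n)) :
    (∀ (n : ℕ)
        (σg : Fin (m n) → {Q : 𝓧 → ℝ // Q ∈ typeSet 𝓧 n} → (Fin n → 𝓩)),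
      ∃ σ : Fin (m n) → (Fin n → 𝓩),
        ((typeSet 𝓧 n).ncard : ℝ)⁻¹ *
            (∑ t : (Fin n → 𝓧) × Fin (m n),
              p n t * ind (seqDist dE t.1 (σg t.2 ⟨empDist t.1, ⟨t.1, rfl⟩⟩) ≤ D))
          ≤ ∑ t : (Fin n → 𝓧) × Fin (m n),
              p n t * ind (seqDist dE t.1 (σ t.2) ≤ D)) ∧
    Filter.liminf (fun n : ℕ =>
        -(n : ℝ)⁻¹ * Real.logb 2
          (⨆ σ : Fin (m n) → (Fin n → 𝓩),
            ∑ t : (Fin n → 𝓧) × Fin (m n), p n t * ind (seqDist dE t.1 (σ t.2) ≤ D)))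
        Filter.atTop
      = Filter.liminf (fun n : ℕ =>
        -(n : ℝ)⁻¹ * Real.logb 2
          (⨆ σg : Fin (m n) → {Q : 𝓧 → ℝ // Q ∈ typeSet 𝓧 n} → (Fin n → 𝓩),
            ∑ t : (Fin n → 𝓧) × Fin (m n),
              p n t * ind (seqDist dE t.1 (σg t.2 ⟨empDist t.1, ⟨t.1, rfl⟩⟩) ≤ D)))
        Filter.atTop ∧
    Filter.limsup (fun n : ℕ =>
        -(n : ℝ)⁻¹ * Real.logb 2
          (⨆ σ : Fin (m n) → (Fin n → 𝓩),
            ∑ t : (Fin n → 𝓧) × Fin (m n), p n t * ind (seqDist dE t.1 (σ t.2) ≤ D)))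
        Filter.atTop
      = Filter.limsup (fun n : ℕ =>
        -(n : ℝ)⁻¹ * Real.logb 2
          (⨆ σg : Fin (m n) → {Q : 𝓧 → ℝ // Q ∈ typeSet 𝓧 n} → (Fin n → 𝓩),
            ∑ t : (Fin n → 𝓧) × Fin (m n),
              p n t * ind (seqDist dE t.1 (σg t.2 ⟨empDist t.1, ⟨t.1, rfl⟩⟩) ≤ D)))
        Filter.atTop := by
  have key : ∀ (n : ℕ)
      (σg : Fin (m n) → {Q : 𝓧 → ℝ // Q ∈ typeSet 𝓧 n} → (Fin n → 𝓩)),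
      ∃ σ : Fin (m n) → (Fin n → 𝓩),
        ((typeSet 𝓧 n).ncard : ℝ)⁻¹ *
            (∑ t : (Fin n → 𝓧) × Fin (m n),
              p n t * ind (seqDist dE t.1 (σg t.2 ⟨empDist t.1, ⟨t.1, rfl⟩⟩) ≤ D))
          ≤ ∑ t : (Fin n → 𝓧) × Fin (m n),
              p n t * ind (seqDist dE t.1 (σ t.2) ≤ D) :=
    fun n σg => key_step dE D (p n) (hp n).1 σg
  obtain ⟨h1, h2⟩ := lim_eqs
    (fun n : ℕ => -(n : ℝ)⁻¹ * Real.logb 2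
      (⨆ σ : Fin (m n) → (Fin n → 𝓩),
        ∑ t : (Fin n → 𝓧) × Fin (m n), p n t * ind (seqDist dE t.1 (σ t.2) ≤ D)))
    (fun n : ℕ => -(n : ℝ)⁻¹ * Real.logb 2
      (⨆ σg : Fin (m n) → {Q : 𝓧 → ℝ // Q ∈ typeSet 𝓧 n} → (Fin n → 𝓩),
        ∑ t : (Fin n → 𝓧) × Fin (m n),
          p n t * ind (seqDist dE t.1 (σg t.2 ⟨empDist t.1, ⟨t.1, rfl⟩⟩) ≤ D)))
    (fun n : ℕ => (Fintype.card 𝓧 : ℝ) * Real.logb 2 (n + 1) / n)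
    (fun n => (pointwise_bounds dE D (p n) (hp n).1 (hp n).2).1)
    (fun n => (pointwise_bounds dE D (p n) (hp n).1 (hp n).2).2.1)
    (fun n => (pointwise_bounds dE D (p n) (hp n).1 (hp n).2).2.2)
    (tendsto_aux (Fintype.card 𝓧))
  exact ⟨key, h1, h2⟩


end
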